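/- For every real x₀ > 0 there exists a constant C = C(x₀) > 0 such that for all x ∈ [0, x₀] and all n ∈ ℕ, |g^{(n)}(1,x)|/n! ≤ C·(n+1)·x. -/

import Mathlib

/-- `g(t,x) = x · t^{-3/2} · exp(-x²/t)`. -/
noncomputable def g (t x : ℝ) : ℝ := x * t ^ (-(3 / 2) : ℝ) * Real.exp (-x ^ 2 / t)


open MeasureTheory Real Set Filter

lemma pow_le_exp_mul_fact {u : ℝ} (hu : 0 ≤ u) (m : ℕ) :
    u ^ m ≤ m.factorial * Real.exp u := by
  have h1 : u ^ m / m.factorial ≤ Real.exp u := by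
    calc u ^ m / m.factorial ≤ ∑ i ∈ Finset.range (m+1), u ^ i / i.factorial :=
          Finset.single_le_sum (f := fun i => u ^ i / (i.factorial : ℝ))
            (fun i _ => by positivity) (by simp)
      _ ≤ Real.exp u := Real.sum_le_exp_of_nonneg hu _
  have hm : (0:ℝ) < m.factorial := by positivity
  rw [div_le_iff₀ hm] at h1
  linarith

lemma abs_pow_mul_exp_le (m : ℕ) {b : ℝ} (hb : 0 < b) (y : ℝ) :
    |y| ^ m * Real.exp (-b * y ^ 2)
      ≤ (1 + m.factorial * (2 / b) ^ m) * Real.exp (-(b/2) * y ^ 2) := by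
  have hu : (0:ℝ) ≤ (b/2) * y ^ 2 := by positivity
  have hA : (y ^ 2) ^ m ≤ m.factorial * (2 / b) ^ m * Real.exp ((b/2) * y ^ 2) := by
    have h := pow_le_exp_mul_fact hu m
    rw [mul_pow] at h
    have hbm : (0:ℝ) < (b/2) ^ m := by positivity
    have h2 : (y ^ 2) ^ m ≤ (m.factorial * Real.exp ((b/2) * y ^ 2)) / (b/2) ^ m := by
      rw [le_div_iff₀ hbm]; linarith [h]
    refine h2.trans (le_of_eq ?_)
    rw [div_pow, div_pow]
    field_simp
  have hexp1 : (1:ℝ) ≤ Real.exp ((b/2) * y ^ 2) := Real.one_le_exp hu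
  have hB : |y| ^ m ≤ (1 + m.factorial * (2 / b) ^ m) * Real.exp ((b/2) * y ^ 2) := by
    have h1 : |y| ^ m ≤ 1 + (y ^ 2) ^ m := by
      rcases le_total (|y|) 1 with h | h
      · nlinarith [pow_le_one₀ (n := m) (abs_nonneg y) h, pow_nonneg (sq_nonneg y) m]
      · have h2 : |y| ^ m ≤ (|y| ^ 2) ^ m := by
          rw [← pow_mul]
          exact pow_le_pow_right₀ h (Nat.le_mul_of_pos_left m two_pos)
        rw [sq_abs] at h2
        linarith
    calc |y| ^ m ≤ 1 + (y ^ 2) ^ m := h1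
      _ ≤ Real.exp ((b/2) * y^2) + m.factorial * (2 / b) ^ m * Real.exp ((b/2) * y ^ 2) := by
          linarith
      _ = _ := by ring
  calc |y| ^ m * Real.exp (-b * y ^ 2)
      ≤ ((1 + m.factorial * (2 / b) ^ m) * Real.exp ((b/2) * y ^ 2)) * Real.exp (-b * y ^ 2) :=
        mul_le_mul_of_nonneg_right hB (Real.exp_pos _).le
    _ = (1 + m.factorial * (2 / b) ^ m) * Real.exp (-(b/2) * y ^ 2) := by
        rw [mul_assoc, ← Real.exp_add]
        ring_nf

lemma aux_integrable (m : ℕ) {b : ℝ} (hb : 0 < b) :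
    Integrable (fun y : ℝ => |y| ^ m * Real.exp (-b * y ^ 2)) := by
  apply Integrable.mono' ((integrable_exp_neg_mul_sq (by positivity : (0:ℝ) < b/2)).const_mul
    (1 + m.factorial * (2 / b) ^ m))
  · exact ((continuous_abs.pow m).mul (Continuous.rexp (by continuity))).aestronglyMeasurable
  · filter_upwards with y
    rw [Real.norm_eq_abs, abs_of_nonneg (by positivity)]
    exact abs_pow_mul_exp_le m hb y

lemma intOn_pow_mul_exp (m : ℕ) :
    IntegrableOn (fun y : ℝ => y ^ m * Real.exp (-y^2)) (Ioi 0) := by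
  have h := (aux_integrable m one_pos).integrableOn (s := Ioi (0:ℝ))
  apply h.congr_fun (fun y hy => ?_) measurableSet_Ioi
  rw [abs_of_nonneg (le_of_lt hy)]
  simp [neg_mul, one_mul]

lemma moment_odd (m : ℕ) :
    ∫ y in Ioi (0:ℝ), y ^ (2*m+1) * Real.exp (-y^2) = m.factorial / 2 := by
  have key := integral_comp_rpow_Ioi_of_pos
    (g := fun u : ℝ => u ^ m * Real.exp (-u)) (p := 2) zero_lt_two
  have hL : (∫ y in Ioi (0:ℝ), ((2:ℝ) * y ^ ((2:ℝ) - 1)) •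
      ((y ^ (2:ℝ)) ^ m * Real.exp (-(y ^ (2:ℝ)))))
      = 2 * ∫ y in Ioi (0:ℝ), y ^ (2*m+1) * Real.exp (-y^2) := by
    rw [← integral_const_mul]
    refine setIntegral_congr_fun measurableSet_Ioi (fun y hy => ?_)
    have h2 : y ^ (2:ℝ) = y ^ 2 := by
      rw [show (2:ℝ) = ((2:ℕ):ℝ) by norm_num, Real.rpow_natCast]
    have h1 : y ^ ((2:ℝ) - 1) = y := by
      norm_num
    rw [h2, h1, smul_eq_mul, ← pow_mul]
    ring_nf
  have hR : (∫ u in Ioi (0:ℝ), u ^ m * Real.exp (-u)) = m.factorial := by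
    have hg : Real.Gamma ((m:ℝ) + 1) = ∫ u in Ioi (0:ℝ), Real.exp (-u) * u ^ ((m:ℝ) + 1 - 1) :=
      Real.Gamma_eq_integral (by positivity)
    have h2 : Real.Gamma ((m:ℝ) + 1) = m.factorial := by
      exact_mod_cast Real.Gamma_nat_eq_factorial m
    rw [← h2, hg]
    refine setIntegral_congr_fun measurableSet_Ioi (fun u hu => ?_)
    rw [show ((m:ℝ) + 1 - 1) = ((m:ℕ):ℝ) by push_cast [Nat.cast_ofNat]; ring, Real.rpow_natCast]
    ring
  rw [hL, hR] at key
  linarith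

lemma moment_even_bound (n : ℕ) :
    ∫ y : ℝ, |y| ^ (2*n+2) * Real.exp (-y^2)
      ≤ 2 * ((n:ℝ)+1) * n.factorial := by
  have hcomp : (fun y : ℝ => |y| ^ (2*n+2) * Real.exp (-y^2))
      = fun y : ℝ => (fun u : ℝ => u ^ (2*n+2) * Real.exp (-u^2)) |y| := by
    funext y
    simp [sq_abs]
  rw [hcomp, integral_comp_abs (f := fun u : ℝ => u ^ (2*n+2) * Real.exp (-u^2))]
  have step : (∫ y in Ioi (0:ℝ), y ^ (2*n+2) * Real.exp (-y^2))
      ≤ ∫ y in Ioi (0:ℝ), (y ^ (2*n+1) + y ^ (2*(n+1)+1)) * Real.exp (-y^2) := by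
    apply setIntegral_mono_on
    · exact intOn_pow_mul_exp (2*n+2)
    · exact IntegrableOn.congr_fun
        ((intOn_pow_mul_exp (2*n+1)).add (intOn_pow_mul_exp (2*(n+1)+1)))
        (fun y hy => by simp [add_mul]) measurableSet_Ioi
    · exact measurableSet_Ioi
    · intro y hy
      have hy' : (0:ℝ) < y := hy
      apply mul_le_mul_of_nonneg_right _ (Real.exp_pos _).le
      rcases le_total y 1 with h | h
      · have : y ^ (2*n+2) ≤ y ^ (2*n+1) := pow_le_pow_of_le_one hy'.le h (by omega)
        nlinarith [pow_nonneg hy'.le (2*(n+1)+1)]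
      · have : y ^ (2*n+2) ≤ y ^ (2*(n+1)+1) := pow_le_pow_right₀ h (by omega)
        nlinarith [pow_nonneg hy'.le (2*n+1)]
  have hsum : (∫ y in Ioi (0:ℝ), (y ^ (2*n+1) + y ^ (2*(n+1)+1)) * Real.exp (-y^2))
      = (n.factorial : ℝ)/2 + ((n+1).factorial : ℝ)/2 := by
    rw [← moment_odd n, ← moment_odd (n+1), ← integral_add]
    · refine setIntegral_congr_fun measurableSet_Ioi (fun y hy => ?_)
      ring
    · exact intOn_pow_mul_exp (2*n+1)
    · exact intOn_pow_mul_exp (2*(n+1)+1)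
  rw [hsum] at step
  have hfact : ((n+1).factorial : ℝ) = ((n:ℝ)+1) * n.factorial := by
    rw [Nat.factorial_succ]; push_cast; ring
  have hfn : (1:ℝ) ≤ (n:ℝ) + 1 := by have := Nat.cast_nonneg (α := ℝ) n; linarith
  have hf0 : (0:ℝ) < n.factorial := by positivity
  calc 2 * ∫ y in Ioi (0:ℝ), y ^ (2*n+2) * Real.exp (-y^2)
      ≤ 2 * ((n.factorial : ℝ)/2 + ((n+1).factorial : ℝ)/2) := by linarith
    _ = (n.factorial : ℝ) + ((n:ℝ)+1) * n.factorial := by rw [hfact]; ring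
    _ ≤ 2 * ((n:ℝ)+1) * n.factorial := by nlinarith
open Complex (I)

lemma cos_identity {t : ℝ} (ht : 0 < t) (x : ℝ) :
    ∫ y : ℝ, Real.cos (2*x*y) * Real.exp (-t * y^2)
      = Real.sqrt (π / t) * Real.exp (-x^2 / t) := by
  have hb : 0 < (t:ℂ).re := by simpa using ht
  have key := fourierIntegral_gaussian hb ((2*x : ℝ) : ℂ)
  have hint : Integrable (fun y : ℝ => Complex.exp (I * ((2*x:ℝ):ℂ) * y) * Complex.exp (-(t:ℂ) * y ^ 2)) := by
    apply Integrable.mono' (integrable_exp_neg_mul_sq ht)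
    · apply Continuous.aestronglyMeasurable
      fun_prop
    · filter_upwards with y
      rw [norm_mul, Complex.norm_exp, Complex.norm_exp]
      have h1 : (I * ((2*x:ℝ):ℂ) * (y:ℂ)).re = 0 := by simp
      have h2 : (-(t:ℂ) * (y:ℂ) ^ 2).re = -t * y ^ 2 := by
        simp [← Complex.ofReal_pow]
      rw [h1, h2]
      simp
  have hre := congrArg Complex.re key
  have h3 := integral_re hint
  simp only [RCLike.re_to_complex] at h3
  rw [← h3] at hre
  have hlhs : (∫ y : ℝ, (Complex.exp (I * ((2*x:ℝ):ℂ) * y) * Complex.exp (-(t:ℂ) * y ^ 2)).re)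
      = ∫ y : ℝ, Real.cos (2*x*y) * Real.exp (-t * y^2) := by
    congr 1
    funext y
    rw [← Complex.exp_add, Complex.exp_re]
    have h1 : (I * ((2*x:ℝ):ℂ) * (y:ℂ) + -(t:ℂ) * (y:ℂ) ^ 2).re = -t * y^2 := by
      simp [← Complex.ofReal_pow]
    have h2 : (I * ((2*x:ℝ):ℂ) * (y:ℂ) + -(t:ℂ) * (y:ℂ) ^ 2).im = 2*x*y := by
      simp [← Complex.ofReal_pow]
    rw [h1, h2]
    ring
  have hrhs : ((↑π / ↑t) ^ (1/2 : ℂ) * Complex.exp (-((2*x:ℝ):ℂ) ^ 2 / (4 * ↑t))).re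
      = Real.sqrt (π / t) * Real.exp (-x^2 / t) := by
    have e1 : ((π : ℂ) / (t : ℂ)) = (((π / t : ℝ)) : ℂ) := by push_cast; ring
    have ht' : (t:ℂ) ≠ 0 := Complex.ofReal_ne_zero.2 ht.ne'
    have e2 : (-((2*x:ℝ):ℂ) ^ 2 / (4 * (t:ℂ))) = (((-x^2/t : ℝ)) : ℂ) := by
      push_cast
      field_simp
      ring
    rw [e1, e2, ← Complex.ofReal_exp, show (1/2 : ℂ) = ((1/2 : ℝ) : ℂ) by norm_num,
      ← Complex.ofReal_cpow (by positivity) (1/2 : ℝ), ← Complex.ofReal_mul,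
      Complex.ofReal_re, ← Real.sqrt_eq_rpow]
  rw [hlhs, hrhs] at hre
  exact hre

lemma sin_identity {t : ℝ} (ht : 0 < t) (x : ℝ) :
    ∫ y : ℝ, y * Real.sin (2*x*y) * Real.exp (-t * y^2)
      = Real.sqrt π * (x * t ^ (-(3 / 2) : ℝ) * Real.exp (-x ^ 2 / t)) := by
  -- derivative of the cos integral under the integral sign
  have hder : HasDerivAt (fun x' : ℝ => ∫ y : ℝ, Real.cos (2*x'*y) * Real.exp (-t * y^2))
      (∫ y : ℝ, (-2) * (y * Real.sin (2*x*y) * Real.exp (-t * y^2))) x := by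
    have := hasDerivAt_integral_of_dominated_loc_of_deriv_le (s := Metric.ball x 1) (μ := volume)
      (F := fun x' (y : ℝ) => Real.cos (2*x'*y) * Real.exp (-t * y^2))
      (F' := fun x' (y : ℝ) => (-2) * (y * Real.sin (2*x'*y) * Real.exp (-t * y^2)))
      (x₀ := x)
      (bound := fun y => 2 * (|y| ^ 1 * Real.exp (-t * y^2)))
      (Metric.ball_mem_nhds x one_pos) ?_ ?_ ?_ ?_ ?_ ?_
    · exact this.2
    · filter_upwards with x'
      exact (Continuous.aestronglyMeasurable (by fun_prop))
    · apply Integrable.mono' (integrable_exp_neg_mul_sq ht)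
      · exact Continuous.aestronglyMeasurable (by fun_prop)
      · filter_upwards with y
        rw [Real.norm_eq_abs, abs_mul, abs_of_nonneg (Real.exp_pos _).le]
        exact mul_le_of_le_one_left (Real.exp_pos _).le (Real.abs_cos_le_one _)
    · exact Continuous.aestronglyMeasurable (by fun_prop)
    · filter_upwards with y
      intro x' _
      rw [Real.norm_eq_abs, abs_mul, abs_mul, abs_mul]
      rw [abs_of_nonneg (Real.exp_pos _).le, pow_one]
      have : |Real.sin (2*x'*y)| ≤ 1 := Real.abs_sin_le_one _
      have hy : (0:ℝ) ≤ |y| := abs_nonneg y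
      have he : (0:ℝ) ≤ Real.exp (-t*y^2) := (Real.exp_pos _).le
      calc |(-2:ℝ)| * (|y| * |Real.sin (2*x'*y)| * Real.exp (-t*y^2))
          ≤ |(-2:ℝ)| * (|y| * 1 * Real.exp (-t*y^2)) := by
            apply mul_le_mul_of_nonneg_left _ (abs_nonneg _)
            apply mul_le_mul_of_nonneg_right _ he
            exact mul_le_mul_of_nonneg_left this hy
        _ = 2 * (|y| * Real.exp (-t*y^2)) := by rw [abs_of_nonpos (by norm_num : (-2:ℝ) ≤ 0)]; ring
    · exact (aux_integrable 1 ht).const_mul 2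
    · filter_upwards with y
      intro x' _
      have h1 : HasDerivAt (fun x' : ℝ => 2*x'*y) (2*y) x' := by
        simpa [mul_assoc] using (hasDerivAt_mul_const y).const_mul (2:ℝ)
      have h2 : HasDerivAt (fun x' : ℝ => Real.cos (2*x'*y)) (-Real.sin (2*x'*y) * (2*y)) x' :=
        h1.cos
      have := h2.mul_const (Real.exp (-t * y^2))
      exact this.congr_deriv (by ring)
  -- derivative of the closed form
  have hder2 : HasDerivAt (fun x' : ℝ => Real.sqrt (π / t) * Real.exp (-x'^2 / t))
      (Real.sqrt (π / t) * (Real.exp (-x^2/t) * (-(2*x)/t))) x := by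
    have h1 : HasDerivAt (fun x' : ℝ => -x'^2 / t) (-(2*x)/t) x := by
      have := (hasDerivAt_pow 2 x).neg.div_const t
      simpa using this
    exact (h1.exp.const_mul _).congr_deriv (by ring)
  have heq : (fun x' : ℝ => ∫ y : ℝ, Real.cos (2*x'*y) * Real.exp (-t * y^2))
      = fun x' : ℝ => Real.sqrt (π / t) * Real.exp (-x'^2 / t) := by
    funext x'
    exact cos_identity ht x'
  rw [heq] at hder
  have huniq := hder.unique hder2
  have hpull : (∫ y : ℝ, (-2) * (y * Real.sin (2*x*y) * Real.exp (-t * y^2)))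
      = (-2) * ∫ y : ℝ, y * Real.sin (2*x*y) * Real.exp (-t * y^2) := integral_const_mul _ _
  rw [hpull] at huniq
  have hI : (∫ y : ℝ, y * Real.sin (2*x*y) * Real.exp (-t * y^2))
      = Real.sqrt (π / t) * Real.exp (-x^2/t) * (x/t) := by
    have := huniq
    linear_combination (-1/2:ℝ) * huniq
  rw [hI]
  -- now convert √(π/t) * exp * (x/t) = √π * (x * t^(-3/2) * exp)
  have hsq : Real.sqrt (π / t) = Real.sqrt π / Real.sqrt t :=
    Real.sqrt_div' π ht.le ▸ by rw [Real.sqrt_div Real.pi_pos.le]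
  have hrpow : t ^ (-(3 / 2) : ℝ) = (Real.sqrt t * t)⁻¹ := by
    rw [show (-(3/2) : ℝ) = -(3/2) by norm_num, Real.rpow_neg ht.le]
    congr 1
    rw [show (3/2 : ℝ) = 1/2 + 1 by norm_num, Real.rpow_add ht, Real.rpow_one,
      ← Real.sqrt_eq_rpow]
  rw [hsq, hrpow]
  have hst : Real.sqrt t > 0 := Real.sqrt_pos.2 ht
  field_simp

lemma hasDeriv_F (x : ℝ) (n : ℕ) {t : ℝ} (ht : 0 < t) :
    HasDerivAt (fun s => ∫ y : ℝ, (-(y^2))^n * (y * Real.sin (2*x*y)) * Real.exp (-s*y^2))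
      (∫ y : ℝ, (-(y^2))^(n+1) * (y * Real.sin (2*x*y)) * Real.exp (-t*y^2)) t := by
  have habs : ∀ (m : ℕ) (y : ℝ), |(-(y^2))^m| = |y| ^ (2*m) := by
    intro m y
    rw [abs_pow, abs_neg, abs_of_nonneg (sq_nonneg y), ← sq_abs, ← pow_mul]

  have hball : ∀ s ∈ Metric.ball t (t/2), t/2 < s := by
    intro s hs
    rw [Metric.mem_ball, Real.dist_eq, abs_lt] at hs
    linarith [hs.1]
  have := hasDerivAt_integral_of_dominated_loc_of_deriv_le (s := Metric.ball t (t/2)) (μ := volume)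
    (F := fun s (y : ℝ) => (-(y^2))^n * (y * Real.sin (2*x*y)) * Real.exp (-s*y^2))
    (F' := fun s (y : ℝ) => (-(y^2))^(n+1) * (y * Real.sin (2*x*y)) * Real.exp (-s*y^2))
    (x₀ := t)
    (bound := fun y => |y| ^ (2*n+3) * Real.exp (-(t/2)*y^2))
    (Metric.ball_mem_nhds t (by positivity)) ?_ ?_ ?_ ?_ ?_ ?_
  · exact this.2
  · filter_upwards with s
    exact Continuous.aestronglyMeasurable (by fun_prop)
  · apply Integrable.mono' (aux_integrable (2*n+1) ht)
    · exact Continuous.aestronglyMeasurable (by fun_prop)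
    · filter_upwards with y
      rw [Real.norm_eq_abs, abs_mul, abs_mul, habs n y, abs_mul,
        abs_of_nonneg (Real.exp_pos _).le]
      have h1 : |y| * |Real.sin (2*x*y)| ≤ |y| :=
        mul_le_of_le_one_right (abs_nonneg y) (Real.abs_sin_le_one _)
      calc |y|^(2*n) * (|y| * |Real.sin (2*x*y)|) * Real.exp (-t*y^2)
          ≤ |y|^(2*n) * |y| * Real.exp (-t*y^2) := by
            apply mul_le_mul_of_nonneg_right _ (Real.exp_pos _).le
            exact mul_le_mul_of_nonneg_left h1 (pow_nonneg (abs_nonneg y) _)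
        _ = |y|^(2*n+1) * Real.exp (-t*y^2) := by rw [← pow_succ]
  · exact Continuous.aestronglyMeasurable (by fun_prop)
  · filter_upwards with y
    intro s hs
    have hs2 : t/2 < s := hball s hs
    rw [Real.norm_eq_abs, abs_mul, abs_mul, habs (n+1) y, abs_mul,
      abs_of_nonneg (Real.exp_pos _).le]
    have h1 : |y| * |Real.sin (2*x*y)| ≤ |y| :=
      mul_le_of_le_one_right (abs_nonneg y) (Real.abs_sin_le_one _)
    have h2 : Real.exp (-s*y^2) ≤ Real.exp (-(t/2)*y^2) := by
      apply Real.exp_le_exp.2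
      nlinarith [sq_nonneg y]
    calc |y|^(2*(n+1)) * (|y| * |Real.sin (2*x*y)|) * Real.exp (-s*y^2)
        ≤ |y|^(2*(n+1)) * |y| * Real.exp (-(t/2)*y^2) := by
          apply mul_le_mul (mul_le_mul_of_nonneg_left h1 (pow_nonneg (abs_nonneg y) _)) h2
            (Real.exp_pos _).le (by positivity)
      _ = |y|^(2*n+3) * Real.exp (-(t/2)*y^2) := by
          rw [show 2*n+3 = 2*(n+1)+1 by omega, ← pow_succ]
  · exact aux_integrable (2*n+3) (by positivity)
  · filter_upwards with y
    intro s _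
    have h1 : HasDerivAt (fun s : ℝ => -s*y^2) (-y^2) s := by
      simpa using (hasDerivAt_neg s).mul_const (y^2)
    have h2 := (h1.exp).const_mul ((-(y^2))^n * (y * Real.sin (2*x*y)))
    exact h2.congr_deriv (by rw [pow_succ]; ring)

lemma iter_eq (x : ℝ) (n : ℕ) {t : ℝ} (ht : 0 < t) :
    iteratedDeriv n (fun s => g s x) t
      = (Real.sqrt π)⁻¹ * ∫ y : ℝ, (-(y^2))^n * (y * Real.sin (2*x*y)) * Real.exp (-t*y^2) := by
  induction n generalizing t with
  | zero =>
    rw [iteratedDeriv_zero]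
    have h0 : (fun y : ℝ => (-(y^2))^0 * (y * Real.sin (2*x*y)) * Real.exp (-t*y^2))
        = fun y : ℝ => y * Real.sin (2*x*y) * Real.exp (-t*y^2) := by
      funext y; rw [pow_zero, one_mul]
    rw [h0]
    have := sin_identity ht x
    rw [show (fun y : ℝ => y * Real.sin (2*x*y) * Real.exp (-t*y^2))
        = fun y : ℝ => y * Real.sin (2*x*y) * Real.exp (-t * y^2) from rfl]
    rw [this]
    have hπ : Real.sqrt π ≠ 0 := by positivity
    rw [g]
    field_simp
  | succ n ih =>
    rw [iteratedDeriv_succ]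
    have hev : iteratedDeriv n (fun s => g s x)
        =ᶠ[nhds t] fun s => (Real.sqrt π)⁻¹ *
          ∫ y : ℝ, (-(y^2))^n * (y * Real.sin (2*x*y)) * Real.exp (-s*y^2) := by
      filter_upwards [isOpen_Ioi.mem_nhds (show t ∈ Ioi (0:ℝ) from ht)] with s hs
      exact ih hs
    rw [hev.deriv_eq]
    exact (((hasDeriv_F x n ht).const_mul ((Real.sqrt π)⁻¹))).deriv

/-- For every `x₀ > 0` there is `C > 0` such that for all `x ∈ [0,x₀]` and all `n : ℕ`,
`|g^{(n)}(1,x)| / n! ≤ C (n+1) x`. -/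
theorem stmt_6 (x₀ : ℝ) (hx₀ : 0 < x₀) :
    ∃ C > (0 : ℝ), ∀ x ∈ Set.Icc (0 : ℝ) x₀, ∀ n : ℕ,
      |iteratedDeriv n (fun s => g s x) 1| / (n.factorial : ℝ) ≤ C * ((n : ℝ) + 1) * x := by
  refine ⟨4, by norm_num, ?_⟩
  rintro x ⟨hx0, hx1⟩ n
  have hfac : (0:ℝ) < n.factorial := by positivity
  rw [iter_eq x n one_pos, div_le_iff₀ hfac]
  have hIeq : (fun y : ℝ => (-(y^2))^n * (y * Real.sin (2*x*y)) * Real.exp (-1*y^2))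
      = fun y : ℝ => (-(y^2))^n * (y * Real.sin (2*x*y)) * Real.exp (-y^2) := by
    funext y; norm_num
  rw [hIeq]
  set I := (∫ y : ℝ, (-(y^2))^n * (y * Real.sin (2*x*y)) * Real.exp (-y^2)) with hIdef
  have hmom := moment_even_bound n
  have hbint : Integrable (fun y : ℝ => 2*x*(|y|^(2*n+2) * Real.exp (-y^2))) := by
    have := (aux_integrable (2*n+2) one_pos).const_mul (2*x)
    apply this.congr
    filter_upwards with y
    norm_num
  have hI : |I| ≤ 2*x*(2*((n:ℝ)+1)*n.factorial) := by
    have hle := MeasureTheory.norm_integral_le_of_norm_le (f := fun y : ℝ =>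
        (-(y^2))^n * (y * Real.sin (2*x*y)) * Real.exp (-y^2)) hbint ?_
    · rw [← Real.norm_eq_abs, hIdef]
      refine hle.trans ?_
      rw [MeasureTheory.integral_const_mul]
      have h2x : (0:ℝ) ≤ 2*x := by linarith
      exact mul_le_mul_of_nonneg_left hmom h2x
    · filter_upwards with y
      rw [Real.norm_eq_abs, abs_mul, abs_mul, abs_mul,
        abs_of_nonneg (Real.exp_pos _).le]
      have habs : |(-(y^2))^n| = |y| ^ (2*n) := by
        rw [abs_pow, abs_neg, abs_of_nonneg (sq_nonneg y), ← sq_abs, ← pow_mul]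
      rw [habs]
      have hsin : |Real.sin (2*x*y)| ≤ 2*x*|y| := by
        refine (Real.abs_sin_le_abs).trans ?_
        rw [abs_mul, abs_mul, abs_of_nonneg (by norm_num : (0:ℝ) ≤ 2), abs_of_nonneg hx0]
      have hkey : |y| * |Real.sin (2*x*y)| ≤ |y| * (2*x*|y|) :=
        mul_le_mul_of_nonneg_left hsin (abs_nonneg y)
      calc |y|^(2*n) * (|y| * |Real.sin (2*x*y)|) * Real.exp (-y^2)
          ≤ |y|^(2*n) * (|y| * (2*x*|y|)) * Real.exp (-y^2) := by
            apply mul_le_mul_of_nonneg_right _ (Real.exp_pos _).le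
            exact mul_le_mul_of_nonneg_left hkey (pow_nonneg (abs_nonneg y) _)
        _ = 2*x*(|y|^(2*n+2) * Real.exp (-y^2)) := by
            rw [show 2*n+2 = (2*n+1)+1 by omega, pow_succ, pow_succ]
            ring
  have hsqrt : (1:ℝ) ≤ Real.sqrt π := by
    rw [show (1:ℝ) = Real.sqrt 1 from (Real.sqrt_one).symm]
    exact Real.sqrt_le_sqrt (by linarith [Real.pi_gt_three])
  have hsp : (0:ℝ) < Real.sqrt π := by positivity
  have hinv : (Real.sqrt π)⁻¹ ≤ 1 := inv_le_one_of_one_le₀ hsqrt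
  calc |(Real.sqrt π)⁻¹ * I| = (Real.sqrt π)⁻¹ * |I| := by
        rw [abs_mul, abs_of_nonneg (by positivity)]
    _ ≤ |I| := mul_le_of_le_one_left (abs_nonneg I) hinv
    _ ≤ 2*x*(2*((n:ℝ)+1)*n.factorial) := hI
    _ = 4 * ((n:ℝ)+1) * x * n.factorial := by ring
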